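/- Let q = e^{2πi/3}, H₊ the 9-dimensional Hopf algebra generated by ã, b̃ (ãb̃ = qb̃ã, ã³ = 1, b̃³ = 0), and P₊ the quantum Borel algebra generated by a, a⁻¹, b with ba = q⁻¹ab. There exists no injective ℂ-algebra homomorphism H₊ → P₊. -/

import Mathlib

noncomputable section

/-- `q = e^{2πi/3}`, a primitive cube root of unity. -/
def qc : ℂ := Complex.exp (2 * Real.pi * Complex.I / 3)

/-- `H₊`: generators `ã, b̃` with `ãb̃ = q b̃ã`, `ã³ = 1`, `b̃³ = 0`. -/
inductive HplusRel : FreeAlgebra ℂ (Fin 2) → FreeAlgebra ℂ (Fin 2) → Prop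
  | ab : HplusRel (FreeAlgebra.ι ℂ 0 * FreeAlgebra.ι ℂ 1)
      (qc • (FreeAlgebra.ι ℂ 1 * FreeAlgebra.ι ℂ 0))
  | a3 : HplusRel (FreeAlgebra.ι ℂ 0 ^ 3) 1
  | b3 : HplusRel (FreeAlgebra.ι ℂ 1 ^ 3) 0

abbrev Hplus : Type := RingQuot HplusRel

/-- The quantum Borel algebra `P₊ = ℂ⟨a, a⁻¹, b⟩/⟨ba − q⁻¹ab⟩` (with `δ = a⁻¹`). -/
inductive BorelRel : FreeAlgebra ℂ (Fin 3) → FreeAlgebra ℂ (Fin 3) → Prop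
  | ad : BorelRel (FreeAlgebra.ι ℂ 0 * FreeAlgebra.ι ℂ 2) 1
  | da : BorelRel (FreeAlgebra.ι ℂ 2 * FreeAlgebra.ι ℂ 0) 1
  | ba : BorelRel (FreeAlgebra.ι ℂ 1 * FreeAlgebra.ι ℂ 0)
      (qc⁻¹ • (FreeAlgebra.ι ℂ 0 * FreeAlgebra.ι ℂ 1))
  | bd : BorelRel (FreeAlgebra.ι ℂ 1 * FreeAlgebra.ι ℂ 2)
      (qc • (FreeAlgebra.ι ℂ 2 * FreeAlgebra.ι ℂ 1))

abbrev Pplus : Type := RingQuot BorelRel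

lemma qc_ne_zero : qc ≠ 0 := Complex.exp_ne_zero _

lemma qc_pow_three : qc ^ 3 = 1 := by
  rw [qc, ← Complex.exp_nat_mul]
  push_cast
  have : (3 : ℂ) * (2 * Real.pi * Complex.I / 3) = 2 * Real.pi * Complex.I := by ring
  rw [this, Complex.exp_two_pi_mul_I]

-- matrix representation
def matA : Matrix (Fin 3) (Fin 3) ℂ := !![1, 0, 0; 0, qc, 0; 0, 0, qc^2]
def matB : Matrix (Fin 3) (Fin 3) ℂ := !![0, 0, 0; 1, 0, 0; 0, 1, 0]

lemma matAB : matA * matB = qc • (matB * matA) := by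
  ext i j
  fin_cases i <;> fin_cases j <;>
    simp [matA, matB, Matrix.mul_apply, Fin.sum_univ_three, Matrix.vecHead, Matrix.vecTail] <;>
    first | ring | exact Or.inr rfl

lemma matA3 : matA ^ 3 = 1 := by
  have h6 : qc ^ 6 = 1 := by
    have : qc ^ 6 = (qc ^ 3) ^ 2 := by ring
    rw [this, qc_pow_three, one_pow]
  ext i j
  fin_cases i <;> fin_cases j <;>
    simp [matA, pow_succ, Matrix.mul_apply, Fin.sum_univ_three, Matrix.one_apply,
      Matrix.vecHead, Matrix.vecTail] <;>
    first
      | exact Or.inr rfl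
      | linear_combination qc_pow_three
      | linear_combination h6

lemma matB3 : matB ^ 3 = 0 := by
  ext i j
  fin_cases i <;> fin_cases j <;>
    simp [matB, pow_succ, Matrix.mul_apply, Fin.sum_univ_three]

def Hrep : Hplus →ₐ[ℂ] Matrix (Fin 3) (Fin 3) ℂ :=
  RingQuot.liftAlgHom ℂ ⟨FreeAlgebra.lift ℂ ![matA, matB], by
    rintro x y ⟨⟩ <;>
      simp only [map_mul, map_pow, map_smul, map_one, map_zero, FreeAlgebra.lift_ι_apply,
        Matrix.cons_val_zero, Matrix.cons_val_one, Matrix.head_cons]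
    · exact matAB
    · exact matA3
    · exact matB3⟩

def bH : Hplus := RingQuot.mkAlgHom ℂ HplusRel (FreeAlgebra.ι ℂ 1)

lemma bH_sq_ne_zero : bH ^ 2 ≠ 0 := by
  intro h
  have h2 : Hrep (bH ^ 2) = matB ^ 2 := by
    simp [bH, Hrep, map_pow, RingQuot.liftAlgHom_mkAlgHom_apply, FreeAlgebra.lift_ι_apply]
  rw [h, map_zero] at h2
  have := congrFun (congrFun h2.symm 2) 0
  simp [matB, pow_succ, Matrix.mul_apply, Fin.sum_univ_three] at this

lemma bH_pow_four : (bH ^ 2) * (bH ^ 2) = 0 := by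
  have h3 : bH ^ 3 = 0 := by
    have := RingQuot.mkAlgHom_rel ℂ HplusRel.b3
    simpa [bH, map_pow, map_zero] using this
  have : (bH ^ 2) * (bH ^ 2) = bH ^ 3 * bH := by
    rw [← pow_add, ← pow_succ]
  rw [this, h3, zero_mul]


abbrev V : Type := (ℤ × ℕ) →₀ ℂ

def opA : Module.End ℂ V := Finsupp.lmapDomain ℂ ℂ (fun p => (p.1 + 1, p.2))
def opD : Module.End ℂ V := Finsupp.lmapDomain ℂ ℂ (fun p => (p.1 - 1, p.2))
def opB : Module.End ℂ V :=
  Finsupp.lsum ℂ (fun p => qc ^ (-p.1) • Finsupp.lsingle (p.1, p.2 + 1))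

@[simp] lemma opA_single (p : ℤ × ℕ) (c : ℂ) :
    opA (Finsupp.single p c) = Finsupp.single (p.1 + 1, p.2) c := by
  simp [opA, Finsupp.lmapDomain_apply, Finsupp.mapDomain_single]

@[simp] lemma opD_single (p : ℤ × ℕ) (c : ℂ) :
    opD (Finsupp.single p c) = Finsupp.single (p.1 - 1, p.2) c := by
  simp [opD, Finsupp.lmapDomain_apply, Finsupp.mapDomain_single]

@[simp] lemma opB_single (p : ℤ × ℕ) (c : ℂ) :
    opB (Finsupp.single p c) = Finsupp.single (p.1, p.2 + 1) (qc ^ (-p.1) * c) := by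
  simp [opB, Finsupp.smul_single]

lemma opAD : opA * opD = 1 := by
  apply Finsupp.lhom_ext
  intro p c
  simp [Module.End.mul_apply]

lemma opDA : opD * opA = 1 := by
  apply Finsupp.lhom_ext
  intro p c
  simp [Module.End.mul_apply]

lemma opBA : opB * opA = qc⁻¹ • (opA * opB) := by
  apply Finsupp.lhom_ext
  intro p c
  simp only [Module.End.mul_apply, opA_single, opB_single, LinearMap.smul_apply,
    Finsupp.smul_single]
  congr 1
  rw [show -(p.1 + 1) = -p.1 + (-1) by ring, zpow_add₀ qc_ne_zero, zpow_neg_one, smul_eq_mul]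
  ring

lemma opBD : opB * opD = qc • (opD * opB) := by
  apply Finsupp.lhom_ext
  intro p c
  simp only [Module.End.mul_apply, opD_single, opB_single, LinearMap.smul_apply,
    Finsupp.smul_single]
  congr 1
  rw [show -(p.1 - 1) = -p.1 + 1 by ring, zpow_add₀ qc_ne_zero, zpow_one, smul_eq_mul]
  ring

def ρ : Pplus →ₐ[ℂ] Module.End ℂ V :=
  RingQuot.liftAlgHom ℂ ⟨FreeAlgebra.lift ℂ ![opA, opB, opD], by
    rintro x y ⟨⟩ <;>
      simp only [map_mul, map_smul, map_one, FreeAlgebra.lift_ι_apply,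
        Matrix.cons_val_zero, Matrix.cons_val_one, Matrix.head_cons,
        Matrix.cons_val_two, Matrix.tail_cons]
    · exact opAD
    · exact opDA
    · exact opBA
    · exact opBD⟩

def πP := RingQuot.mkAlgHom ℂ BorelRel

def aP : Pplus := πP (FreeAlgebra.ι ℂ 0)
def bP : Pplus := πP (FreeAlgebra.ι ℂ 1)
def dP : Pplus := πP (FreeAlgebra.ι ℂ 2)

lemma ad_one : aP * dP = 1 := by
  have := RingQuot.mkAlgHom_rel ℂ BorelRel.ad
  simpa [aP, dP, πP, map_mul, map_one] using this

lemma da_one : dP * aP = 1 := by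
  have := RingQuot.mkAlgHom_rel ℂ BorelRel.da
  simpa [aP, dP, πP, map_mul, map_one] using this

def uP : Pplusˣ := ⟨aP, dP, ad_one, da_one⟩

@[simp] lemma rho_aP : ρ aP = opA := by
  simp [ρ, aP, πP, RingQuot.liftAlgHom_mkAlgHom_apply, FreeAlgebra.lift_ι_apply]

@[simp] lemma rho_bP : ρ bP = opB := by
  simp [ρ, bP, πP, RingQuot.liftAlgHom_mkAlgHom_apply, FreeAlgebra.lift_ι_apply]

@[simp] lemma rho_dP : ρ dP = opD := by
  simp [ρ, dP, πP, RingQuot.liftAlgHom_mkAlgHom_apply, FreeAlgebra.lift_ι_apply]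


def AU : (Module.End ℂ V)ˣ := ⟨opA, opD, opAD, opDA⟩

lemma units_map_uP : Units.map (ρ : Pplus →* Module.End ℂ V) uP = AU := by
  ext
  simp [uP, AU]

lemma rho_uP_zpow (m : ℤ) : ρ ↑(uP ^ m) = ↑(AU ^ m) := by
  have : ρ ↑(uP ^ m) = ↑(Units.map (ρ : Pplus →* Module.End ℂ V) (uP ^ m)) := rfl
  rw [this, map_zpow, units_map_uP]

lemma AU_zpow_single (m : ℤ) : ∀ (k : ℤ) (l : ℕ) (c : ℂ),
    (↑(AU ^ m) : Module.End ℂ V) (Finsupp.single (k, l) c) = Finsupp.single (k + m, l) c := by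
  induction m using Int.induction_on with
  | zero => intro k l c; simp
  | succ n ih =>
      intro k l c
      rw [zpow_add_one]
      have : (↑(AU ^ (n : ℤ) * AU) : Module.End ℂ V) (Finsupp.single (k, l) c)
          = (↑(AU ^ (n : ℤ)) : Module.End ℂ V) (opA (Finsupp.single (k, l) c)) := rfl
      rw [this, opA_single]
      dsimp only
      rw [ih]
      congr 2
      ring
  | pred n ih =>
      intro k l c
      rw [zpow_sub_one]
      have : (↑(AU ^ (-n : ℤ) * AU⁻¹) : Module.End ℂ V) (Finsupp.single (k, l) c)
          = (↑(AU ^ (-n : ℤ)) : Module.End ℂ V) (opD (Finsupp.single (k, l) c)) := rfl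
      rw [this, opD_single]
      dsimp only
      rw [ih]
      congr 2
      ring

lemma opB_pow_single (n : ℕ) (k : ℤ) (l : ℕ) (c : ℂ) :
    (opB ^ n) (Finsupp.single (k, l) c)
      = Finsupp.single (k, l + n) (qc ^ (-(k * n)) * c) := by
  induction n with
  | zero => simp
  | succ n ih =>
      rw [pow_succ']
      have : (opB * opB ^ n) (Finsupp.single (k, l) c)
          = opB ((opB ^ n) (Finsupp.single (k, l) c)) := rfl
      rw [this, ih, opB_single]
      dsimp only
      congr 1
      rw [show (-(k * (n+1 : ℕ)) : ℤ) = -k + -(k * n) by push_cast; ring,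
        zpow_add₀ qc_ne_zero]
      ring

def mono (p : ℤ × ℕ) : Pplus := (↑(uP ^ p.1) : Pplus) * bP ^ p.2

lemma rho_mono_single (m k : ℤ) (n l : ℕ) (c : ℂ) :
    ρ (mono (m, n)) (Finsupp.single (k, l) c)
      = Finsupp.single (k + m, l + n) (qc ^ (-(k * n)) * c) := by
  have : ρ (mono (m, n)) (Finsupp.single (k, l) c)
      = ρ ↑(uP ^ m) ((ρ bP ^ n) (Finsupp.single (k, l) c)) := by
    rw [mono, map_mul, map_pow]
    rfl
  rw [this, rho_bP, opB_pow_single, rho_uP_zpow, AU_zpow_single]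

def T : V →ₗ[ℂ] Pplus :=
  Finsupp.lsum ℂ fun p => LinearMap.toSpanSingleton ℂ Pplus (mono p)

@[simp] lemma T_single (p : ℤ × ℕ) (c : ℂ) : T (Finsupp.single p c) = c • mono p := by
  simp [T, LinearMap.toSpanSingleton_apply]

def ev : Pplus →ₗ[ℂ] V where
  toFun x := ρ x (Finsupp.single (0, 0) 1)
  map_add' x y := by simp [map_add]
  map_smul' c x := by simp [map_smul]

@[simp] lemma ev_mono (p : ℤ × ℕ) : ev (mono p) = Finsupp.single p 1 := by
  show ρ (mono p) (Finsupp.single ((0 : ℤ), (0 : ℕ)) 1) = _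
  rw [show p = (p.1, p.2) from rfl, rho_mono_single]
  simp

lemma ev_T (v : V) : ev (T v) = v := by
  induction v using Finsupp.induction_linear with
  | zero => simp
  | add f g hf hg => rw [map_add, map_add, hf, hg]
  | single p c => simp [Finsupp.smul_single]


lemma bA : bP * aP = qc⁻¹ • (aP * bP) := by
  have := RingQuot.mkAlgHom_rel ℂ BorelRel.ba
  simpa [aP, bP, πP, map_mul, map_smul] using this

lemma bD : bP * dP = qc • (dP * bP) := by
  have := RingQuot.mkAlgHom_rel ℂ BorelRel.bd
  simpa [bP, dP, πP, map_mul, map_smul] using this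

lemma b_u_comm (k : ℤ) : bP * ↑(uP ^ k) = qc ^ (-k) • (↑(uP ^ k) * bP) := by
  induction k using Int.induction_on with
  | zero => simp
  | succ n ih =>
      rw [zpow_add_one, Units.val_mul, ← mul_assoc, ih, smul_mul_assoc, mul_assoc,
        show (uP : Pplus) = aP from rfl, bA, mul_smul_comm, smul_smul, ← mul_assoc]
      congr 1
      rw [← zpow_sub_one₀ qc_ne_zero]
      congr 1
      omega
  | pred n ih =>
      rw [zpow_sub_one, Units.val_mul, ← mul_assoc, ih, smul_mul_assoc, mul_assoc,
        show ((uP⁻¹ : Pplusˣ) : Pplus) = dP from rfl, bD, mul_smul_comm, smul_smul, ← mul_assoc]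
      congr 1
      rw [← zpow_add_one₀ qc_ne_zero]
      congr 1
      omega

lemma bpow_u_comm (n : ℕ) (k : ℤ) :
    bP ^ n * ↑(uP ^ k) = qc ^ (-(k * n)) • (↑(uP ^ k) * bP ^ n) := by
  induction n with
  | zero => simp
  | succ n ih =>
      rw [pow_succ', mul_assoc, ih, mul_smul_comm, ← mul_assoc, b_u_comm, smul_mul_assoc,
        smul_smul, mul_assoc, ← pow_succ']
      congr 1
      rw [← zpow_add₀ qc_ne_zero]
      congr 1
      push_cast
      ring

lemma mono_mul (p p' : ℤ × ℕ) :
    mono p * mono p' = qc ^ (-(p'.1 * p.2)) • mono (p.1 + p'.1, p.2 + p'.2) := by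
  obtain ⟨m, n⟩ := p
  obtain ⟨k, l⟩ := p'
  show (↑(uP ^ m) * bP ^ n) * (↑(uP ^ k) * bP ^ l) = _
  rw [mul_assoc, ← mul_assoc (bP ^ n), bpow_u_comm, smul_mul_assoc, mul_smul_comm,
    ← mul_assoc, ← mul_assoc, ← Units.val_mul, ← zpow_add]
  · rw [mul_assoc, ← pow_add]
    rfl
def SP : Submodule ℂ Pplus := Submodule.span ℂ (Set.range mono)

lemma mono_mem_SP (p : ℤ × ℕ) : mono p ∈ SP := Submodule.subset_span ⟨p, rfl⟩

lemma mono_zero : mono (0, 0) = 1 := by simp [mono]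
lemma mono_a : mono (1, 0) = aP := by simp [mono]; rfl
lemma mono_d : mono (-1, 0) = dP := by simp [mono]; rfl
lemma mono_b : mono (0, 1) = bP := by simp [mono]

lemma SP_mul_mem {x y : Pplus} (hx : x ∈ SP) (hy : y ∈ SP) : x * y ∈ SP := by
  induction hx using Submodule.span_induction with
  | mem x hxm =>
      obtain ⟨p, rfl⟩ := hxm
      induction hy using Submodule.span_induction with
      | mem y hym =>
          obtain ⟨p', rfl⟩ := hym
          rw [mono_mul]
          exact Submodule.smul_mem _ _ (mono_mem_SP _)
      | zero => rw [mul_zero]; exact zero_mem _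
      | add y z _ _ hy hz => rw [mul_add]; exact add_mem hy hz
      | smul c y _ hy => rw [mul_smul_comm]; exact Submodule.smul_mem _ _ hy
  | zero => rw [zero_mul]; exact zero_mem _
  | add x z _ _ h1 h2 => rw [add_mul]; exact add_mem h1 h2
  | smul c x _ h => rw [smul_mul_assoc]; exact Submodule.smul_mem _ _ h

lemma mem_SP (z : Pplus) : z ∈ SP := by
  obtain ⟨w, rfl⟩ := RingQuot.mkAlgHom_surjective ℂ BorelRel z
  induction w using FreeAlgebra.induction with
  | grade0 r =>
      rw [AlgHom.commutes, Algebra.algebraMap_eq_smul_one]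
      exact Submodule.smul_mem _ _ (mono_zero ▸ mono_mem_SP (0, 0))
  | grade1 i =>
      fin_cases i
      · exact (show (RingQuot.mkAlgHom ℂ BorelRel) (FreeAlgebra.ι ℂ 0) = mono (1,0)
            from mono_a.symm) ▸ mono_mem_SP (1, 0)
      · exact (show (RingQuot.mkAlgHom ℂ BorelRel) (FreeAlgebra.ι ℂ 1) = mono (0,1)
            from mono_b.symm) ▸ mono_mem_SP (0, 1)
      · exact (show (RingQuot.mkAlgHom ℂ BorelRel) (FreeAlgebra.ι ℂ 2) = mono (-1,0)
            from mono_d.symm) ▸ mono_mem_SP (-1, 0)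
  | mul a b ha hb => rw [map_mul]; exact SP_mul_mem ha hb
  | add a b ha hb => rw [map_add]; exact add_mem ha hb

lemma T_surjective : Function.Surjective T := by
  intro z
  have hz : z ∈ SP := mem_SP z
  have hle : SP ≤ LinearMap.range T := by
    rw [SP, Submodule.span_le]
    rintro _ ⟨p, rfl⟩
    exact ⟨Finsupp.single p 1, by simp⟩
  exact hle hz

lemma T_ev (x : Pplus) : T (ev x) = x := by
  obtain ⟨v, rfl⟩ := T_surjective x
  rw [ev_T]


lemma ev_sq (x : Pplus) : ev (x * x) = ρ x (ev x) := by
  show ρ (x * x) _ = _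
  rw [map_mul]
  rfl

lemma rho_mono_v (v : V) (p : ℤ × ℕ) :
    ρ (mono p) v = ∑ p' ∈ v.support,
      Finsupp.single (p'.1 + p.1, p'.2 + p.2) (qc ^ (-(p'.1 * (p.2 : ℤ))) * v p') := by
  conv_lhs => rw [← Finsupp.sum_single v, Finsupp.sum]
  rw [map_sum]
  refine Finset.sum_congr rfl fun p' _ => ?_
  exact rho_mono_single p.1 p'.1 p.2 p'.2 (v p')

lemma no_sq_zero {x : Pplus} (hsq : x * x = 0) : x = 0 := by
  by_contra hx
  set v := ev x with hv
  have hvne : v ≠ 0 := fun h => hx (by rw [← T_ev x, ← hv, h, map_zero])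
  have hsupp : v.support.Nonempty := Finsupp.support_nonempty_iff.mpr hvne
  set ns := v.support.image Prod.snd with hns
  have hnsne : ns.Nonempty := hsupp.image _
  set N := ns.max' hnsne with hN
  set ms := (v.support.filter (fun p => p.2 = N)).image Prod.fst with hms
  have hmsne : ms.Nonempty := by
    obtain ⟨p, hp, hpN⟩ := Finset.mem_image.mp (ns.max'_mem hnsne)
    exact ⟨p.1, Finset.mem_image.mpr ⟨p, Finset.mem_filter.mpr ⟨hp, hpN⟩, rfl⟩⟩
  set M := ms.max' hmsne with hM
  have hsnd : ∀ p ∈ v.support, p.2 ≤ N :=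
    fun p hp => Finset.le_max' _ _ (Finset.mem_image.mpr ⟨p, hp, rfl⟩)
  have hfst : ∀ p ∈ v.support, p.2 = N → p.1 ≤ M :=
    fun p hp h2 => Finset.le_max' _ _
      (Finset.mem_image.mpr ⟨p, Finset.mem_filter.mpr ⟨hp, h2⟩, rfl⟩)
  have hpstar : ((M, N) : ℤ × ℕ) ∈ v.support := by
    obtain ⟨p, hp, hpM⟩ := Finset.mem_image.mp (ms.max'_mem hmsne)
    obtain ⟨hp1, hp2⟩ := Finset.mem_filter.mp hp
    have : p = (M, N) := Prod.ext hpM hp2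
    rwa [← this]
  -- the key pair condition
  have key : ∀ p ∈ v.support, ∀ p' ∈ v.support,
      (p'.1 + p.1, p'.2 + p.2) = ((2 * M, 2 * N) : ℤ × ℕ) → p = (M, N) ∧ p' = (M, N) := by
    intro p hp p' hp' hcond
    rw [Prod.mk.injEq] at hcond
    obtain ⟨h1, h2⟩ := hcond
    have hN2 : p.2 = N ∧ p'.2 = N := by
      have := hsnd p hp; have := hsnd p' hp'; omega
    have hM2 : p.1 = M ∧ p'.1 = M := by
      have := hfst p hp hN2.1; have := hfst p' hp' hN2.2; omega
    exact ⟨Prod.ext hM2.1 hN2.1, Prod.ext hM2.2 hN2.2⟩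
  -- evaluate coefficient at (2M, 2N)
  have hcoef : (ev (x * x)) (2 * M, 2 * N)
      = v (M, N) * (qc ^ (-((M : ℤ) * (N : ℤ))) * v (M, N)) := by
    rw [ev_sq, ← hv, show x = T v from (T_ev x).symm]
    rw [T, Finsupp.lsum_apply, Finsupp.sum, map_sum, LinearMap.sum_apply,
      Finsupp.finset_sum_apply]
    have hterm : ∀ p ∈ v.support,
        ((ρ (LinearMap.toSpanSingleton ℂ Pplus (mono p) (v p))) v) (2 * M, 2 * N)
        = if p = (M, N) then v (M, N) * (qc ^ (-((M : ℤ) * (N : ℤ))) * v (M, N)) else 0 := by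
      intro p hp
      rw [LinearMap.toSpanSingleton_apply, map_smul, LinearMap.smul_apply,
        rho_mono_v, Finsupp.smul_apply, Finsupp.finset_sum_apply]
      by_cases hpe : p = (M, N)
      · subst hpe
        rw [if_pos rfl]
        rw [Finset.sum_eq_single_of_mem (M, N) hpstar]
        · rw [Finsupp.single_apply, if_pos (by rw [Prod.mk.injEq]; omega)]
          simp [smul_eq_mul]
        · intro p' hp' hne
          rw [Finsupp.single_apply, if_neg]
          intro hcond
          exact hne (key _ hpstar p' hp' hcond).2
      · rw [if_neg hpe]
        rw [Finset.sum_eq_zero, smul_zero]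
        intro p' hp'
        rw [Finsupp.single_apply, if_neg]
        intro hcond
        exact hpe (key p hp p' hp' hcond).1
    rw [Finset.sum_congr rfl hterm, Finset.sum_ite_eq' v.support (M, N)
      (fun _ => v (M, N) * (qc ^ (-((M : ℤ) * (N : ℤ))) * v (M, N))), if_pos hpstar]
  rw [hsq, map_zero] at hcoef
  have hvMN : v (M, N) ≠ 0 := Finsupp.mem_support_iff.mp hpstar
  have h' : v (M, N) * (qc ^ (-((M : ℤ) * (N : ℤ))) * v (M, N)) ≠ 0 :=
    mul_ne_zero hvMN (mul_ne_zero (zpow_ne_zero _ qc_ne_zero) hvMN)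
  exact h' (by simpa using hcoef.symm)


/-- There is no injective `ℂ`-algebra homomorphism `H₊ → P₊`. -/
theorem no_injective_algHom_Hplus_Pplus :
    ¬ ∃ f : Hplus →ₐ[ℂ] Pplus, Function.Injective f := by
  rintro ⟨f, hf⟩
  have h1 : f (bH ^ 2) ≠ 0 := by
    intro h
    exact bH_sq_ne_zero (hf (by rw [h, map_zero]))
  have h2 : f (bH ^ 2) * f (bH ^ 2) = 0 := by
    rw [← map_mul, bH_pow_four, map_zero]
  exact h1 (no_sq_zero h2)

end
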